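/- If every model m : Prop → [0,∞] satisfies all judgements (n+1)p ⊢ n·q for n ∈ ℕ, then m(p) ≥ m(q); i.e., for a, b ∈ [0,∞], if (n+1)·a ≥ n·b for all n ∈ ℕ, then a ≥ b. -/
import Mathlib


open ENNReal

/-- Semantic entailment behind the incompleteness example: if
`(n+1)·a ≥ n·b` for all `n : ℕ`, then `a ≥ b` in `[0,∞]`. -/
theorem infinite_axioms_entail (a b : ℝ≥0∞)
    (h : ∀ n : ℕ, (n : ℝ≥0∞) * b ≤ ((n : ℝ≥0∞) + 1) * a) : b ≤ a := by
  by_contra hab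
  push_neg at hab
  have ha : a ≠ ⊤ := fun h' => by simp [h'] at hab
  have hb : b ≠ ⊤ := by
    intro h'
    have h2 : (⊤ : ℝ≥0∞) ≤ ((1 : ℕ) + 1 : ℝ≥0∞) * a := by simpa [h'] using h 1
    have h3 := top_le_iff.mp h2
    rcases ENNReal.mul_eq_top.mp h3 with ⟨_, h4⟩ | ⟨h4, _⟩
    · exact ha h4
    · simp at h4
  have hpos : 0 < b - a := tsub_pos_of_lt hab
  obtain ⟨n, hn⟩ := ENNReal.exists_nat_gt (show a / (b - a) ≠ ⊤ from
    (ENNReal.div_lt_top ha (ne_of_gt hpos)).ne)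
  have hkey : (n : ℝ≥0∞) * (b - a) ≤ a := by
    have h1 := h n
    have h2 : (n : ℝ≥0∞) * b ≤ (n : ℝ≥0∞) * a + a := by
      calc (n : ℝ≥0∞) * b ≤ ((n : ℝ≥0∞) + 1) * a := h1
        _ = (n : ℝ≥0∞) * a + a := by ring
    rw [ENNReal.mul_sub (fun _ _ => ENNReal.natCast_ne_top n)]
    exact tsub_le_iff_left.mpr h2
  have : a / (b - a) < (n : ℝ≥0∞) := hn
  have : a < (n : ℝ≥0∞) * (b - a) := by
    rwa [ENNReal.div_lt_iff (Or.inl (ne_of_gt hpos)) (Or.inl (ENNReal.sub_ne_top hb))] at this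
  exact absurd hkey (not_le.mpr this)
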